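/- Assume b is nondegenerate and let φ ∈ V_ℂ satisfy b(φ,φ) = 0 and b(φ,φ̄) > 0. Set T_φ := {α ∈ V_ℂ : b(α,φ) = 0 and b(α,φ̄) = 0}. Then V_ℂ = ℂφ ⊕ ℂφ̄ ⊕ T_φ, and the alternating real bilinear form Ω(α,β) := Im b(α, β̄) is nondegenerate on T_φ viewed as a real vector space. (T_φ models the tangent space of the moduli space of generalized Calabi–Yau structures at φ, and Ω its symplectic structure.) -/

import Mathlib

/-!
Statement 14: Assume b is nondegenerate and let φ ∈ V_ℂ satisfy b(φ,φ) = 0 and b(φ,φ̄) > 0.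
Set T_φ := {α ∈ V_ℂ : b(α,φ) = 0 and b(α,φ̄) = 0}. Then V_ℂ = ℂφ ⊕ ℂφ̄ ⊕ T_φ, and the
alternating real bilinear form Ω(α,β) := Im b(α,β̄) is nondegenerate on T_φ viewed as a
real vector space.
-/

open scoped TensorProduct ComplexOrder

set_option synthInstance.maxHeartbeats 1000000
set_option maxHeartbeats 1000000

noncomputable section

variable (V : Type) [AddCommGroup V] [Module ℝ V]

/-- The complexification `V_ℂ = ℂ ⊗ V`. -/
abbrev VC := ℂ ⊗[ℝ] V

/-- Complex conjugation on `ℂ`, as an ℝ-linear map. -/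
def conjR : ℂ →ₗ[ℝ] ℂ := Complex.conjAe.toLinearMap

/-- Complex conjugation on `V_ℂ`, fixing the real points `V`. -/
def cV : VC V →ₗ[ℝ] VC V := LinearMap.rTensor V conjR

/-- The ℂ-bilinear extension of `b` to `V_ℂ`. -/
def bC (b : LinearMap.BilinForm ℝ V) : LinearMap.BilinForm ℂ (VC V) :=
  LinearMap.BilinForm.baseChange ℂ b

/-- The subspace `T_φ = {α : b(α,φ) = 0 = b(α,φ̄)}` of `V_ℂ`. -/
def Tspace (b : LinearMap.BilinForm ℝ V) (φ : VC V) : Submodule ℂ (VC V) :=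
  LinearMap.ker ((bC V b).flip φ) ⊓ LinearMap.ker ((bC V b).flip (cV V φ))

lemma cV_tmul (z : ℂ) (v : V) : cV V (z ⊗ₜ v) = (starRingEnd ℂ z) ⊗ₜ v := rfl

lemma cV_cV (x : VC V) : cV V (cV V x) = x := by
  induction x using TensorProduct.induction_on with
  | zero => simp
  | tmul z v => simp [cV_tmul]
  | add a c ha hc => simp [map_add, ha, hc]

lemma cV_smul (z : ℂ) (x : VC V) : cV V (z • x) = (starRingEnd ℂ z) • cV V x := by
  induction x using TensorProduct.induction_on with
  | zero => simp
  | tmul w v => rw [TensorProduct.smul_tmul', cV_tmul, cV_tmul, TensorProduct.smul_tmul']; simp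
  | add a c ha hc => simp only [smul_add, map_add, ha, hc]

lemma bC_symm (b : LinearMap.BilinForm ℝ V) (hsymm : ∀ u v : V, b u v = b v u)
    (x y : VC V) : bC V b x y = bC V b y x := by
  induction x using TensorProduct.induction_on with
  | zero => simp
  | tmul z u =>
    induction y using TensorProduct.induction_on with
    | zero => simp
    | tmul w v => simp [bC, hsymm u v, mul_comm]
    | add a c ha hc => simp only [map_add, LinearMap.add_apply, ha, hc]
  | add a c ha hc => simp only [map_add, LinearMap.add_apply, ha, hc]

lemma bC_conj (b : LinearMap.BilinForm ℝ V) (x y : VC V) :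
    bC V b (cV V x) (cV V y) = starRingEnd ℂ (bC V b x y) := by
  induction x using TensorProduct.induction_on with
  | zero => simp
  | tmul z u =>
    induction y using TensorProduct.induction_on with
    | zero => simp
    | tmul w v =>
      simp only [cV_tmul, bC, LinearMap.BilinForm.baseChange_tmul]
      rw [← map_mul]
      simp [Complex.real_smul]
    | add a c ha hc => simp only [map_add, ha, hc]
  | add a c ha hc => simp only [map_add, LinearMap.add_apply, ha, hc]

lemma bC_nondeg (b : LinearMap.BilinForm ℝ V) [FiniteDimensional ℝ V]
    (hnd : LinearMap.BilinForm.Nondegenerate b) :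
    (bC V b).SeparatingLeft := by
  intro x hx
  set E := Module.finBasis ℝ V with hE
  set F := LinearMap.BilinForm.dualBasis b hnd E with hF
  refine (F.baseChange ℂ).ext_elem fun j => ?_
  have key : bC V b x ((1:ℂ) ⊗ₜ E j) = (F.baseChange ℂ).repr x j := by
    conv_lhs => rw [← (F.baseChange ℂ).sum_repr x]
    rw [map_sum, LinearMap.sum_apply]
    have : ∀ i, bC V b ((F.baseChange ℂ).repr x i • F.baseChange ℂ i) ((1:ℂ) ⊗ₜ E j)
        = if j = i then (F.baseChange ℂ).repr x i else 0 := by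
      intro i
      rw [map_smul, LinearMap.smul_apply, Module.Basis.baseChange_apply]
      rcases eq_or_ne j i with h | h <;>
        simp [bC, hF, LinearMap.BilinForm.apply_dualBasis_left, h]
    simp only [this, Finset.sum_ite_eq, Finset.mem_univ, if_true]
  rw [hx ((1:ℂ) ⊗ₜ E j)] at key
  simp [← key]

/-- For `φ ∈ V_ℂ` with `b(φ,φ) = 0` and `b(φ,φ̄) > 0`, the space `V_ℂ`
decomposes as `ℂφ ⊕ ℂφ̄ ⊕ T_φ`, and `Ω(α,β) := Im b(α,β̄)` is nondegenerate on `T_φ`. -/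
theorem tangent_space_decomposition_and_symplectic
    (V : Type) [AddCommGroup V] [Module ℝ V] [FiniteDimensional ℝ V]
    (b : LinearMap.BilinForm ℝ V) (hsymm : ∀ u v : V, b u v = b v u)
    (hnd : LinearMap.BilinForm.Nondegenerate b)
    (φ : VC V) (hφ0 : bC V b φ φ = 0) (hφpos : 0 < bC V b φ (cV V φ)) :
    (Submodule.span ℂ ({φ} : Set (VC V)) ⊓ Submodule.span ℂ ({cV V φ} : Set (VC V)) = ⊥) ∧
    IsCompl (Submodule.span ℂ ({φ, cV V φ} : Set (VC V))) (Tspace V b φ) ∧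
    (∀ α ∈ Tspace V b φ,
      (∀ β ∈ Tspace V b φ, (bC V b α (cV V β)).im = 0) → α = 0) := by
  have hc0 : bC V b φ (cV V φ) ≠ 0 := (ne_of_lt hφpos).symm
  have hcc : bC V b (cV V φ) (cV V φ) = 0 := by
    rw [bC_conj, hφ0, map_zero]
  have hcφ : bC V b (cV V φ) φ = bC V b φ (cV V φ) := bC_symm V b hsymm _ _
  have memT : ∀ x : VC V, x ∈ Tspace V b φ ↔
      bC V b x φ = 0 ∧ bC V b x (cV V φ) = 0 := by
    intro x
    simp [Tspace, Submodule.mem_inf, LinearMap.mem_ker, LinearMap.flip_apply]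
  -- Part 1
  have part1 : Submodule.span ℂ ({φ} : Set (VC V)) ⊓
      Submodule.span ℂ ({cV V φ} : Set (VC V)) = ⊥ := by
    rw [eq_bot_iff]
    rintro x hx
    obtain ⟨hx1, hx2⟩ := Submodule.mem_inf.mp hx
    obtain ⟨z, hz⟩ := Submodule.mem_span_singleton.mp hx1
    obtain ⟨w, hw⟩ := Submodule.mem_span_singleton.mp hx2
    have e1 : bC V b x (cV V φ) = z * bC V b φ (cV V φ) := by
      rw [← hz, map_smul, LinearMap.smul_apply, smul_eq_mul]
    have e2 : bC V b x (cV V φ) = 0 := by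
      rw [← hw, map_smul, LinearMap.smul_apply, hcc, smul_zero]
    have hz0 : z = 0 := by
      rcases mul_eq_zero.mp (e1 ▸ e2 : z * bC V b φ (cV V φ) = 0) with h | h
      · exact h
      · exact absurd h hc0
    simp [← hz, hz0]
  -- Codisjointness (also used in part 3)
  have codis : Submodule.span ℂ ({φ, cV V φ} : Set (VC V)) ⊔ Tspace V b φ = ⊤ := by
    rw [eq_top_iff]
    intro α _
    refine Submodule.mem_sup.mpr
      ⟨(bC V b α (cV V φ) / bC V b φ (cV V φ)) • φ +
       (bC V b α φ / bC V b φ (cV V φ)) • cV V φ, ?_,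
       α - ((bC V b α (cV V φ) / bC V b φ (cV V φ)) • φ +
       (bC V b α φ / bC V b φ (cV V φ)) • cV V φ), ?_, by abel⟩
    · exact Submodule.add_mem _
        (Submodule.smul_mem _ _ (Submodule.subset_span (by simp)))
        (Submodule.smul_mem _ _ (Submodule.subset_span (by simp)))
    · rw [memT]
      constructor
      · simp only [map_sub, map_add, map_smul, LinearMap.sub_apply, LinearMap.add_apply,
          LinearMap.smul_apply, smul_eq_mul]
        rw [hφ0, hcφ, div_mul_cancel₀ _ hc0]
        ring
      · simp only [map_sub, map_add, map_smul, LinearMap.sub_apply, LinearMap.add_apply,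
          LinearMap.smul_apply, smul_eq_mul]
        rw [hcc, div_mul_cancel₀ _ hc0]
        ring
  -- Disjointness
  have disj : Disjoint (Submodule.span ℂ ({φ, cV V φ} : Set (VC V))) (Tspace V b φ) := by
    rw [Submodule.disjoint_def]
    intro x hxW hxT
    obtain ⟨z, w, hzw⟩ := Submodule.mem_span_pair.mp hxW
    obtain ⟨h1, h2⟩ := (memT x).mp hxT
    have e1 : bC V b x φ = w * bC V b φ (cV V φ) := by
      rw [← hzw]
      simp only [map_add, map_smul, LinearMap.add_apply, LinearMap.smul_apply, smul_eq_mul]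
      rw [hφ0, hcφ]; ring
    have e2 : bC V b x (cV V φ) = z * bC V b φ (cV V φ) := by
      rw [← hzw]
      simp only [map_add, map_smul, LinearMap.add_apply, LinearMap.smul_apply, smul_eq_mul]
      rw [hcc]; ring
    have hw0 : w = 0 := by
      rcases mul_eq_zero.mp (e1 ▸ h1 : w * bC V b φ (cV V φ) = 0) with h | h
      · exact h
      · exact absurd h hc0
    have hz0 : z = 0 := by
      rcases mul_eq_zero.mp (e2 ▸ h2 : z * bC V b φ (cV V φ) = 0) with h | h
      · exact h
      · exact absurd h hc0
    simp [← hzw, hz0, hw0]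
  refine ⟨part1, ⟨disj, codisjoint_iff.mpr codis⟩, ?_⟩
  -- Part 3
  intro α hα hIm
  have hαφ := (memT α).mp hα
  -- T is conjugation stable
  have hTconj : ∀ γ ∈ Tspace V b φ, cV V γ ∈ Tspace V b φ := by
    intro γ hγ
    obtain ⟨h1, h2⟩ := (memT γ).mp hγ
    rw [memT]
    constructor
    · conv_lhs => rw [← cV_cV V φ]
      rw [bC_conj, h2, map_zero]
    · rw [bC_conj, h1, map_zero]
  -- bC α γ = 0 for all γ ∈ T
  have hT0 : ∀ γ ∈ Tspace V b φ, bC V b α γ = 0 := by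
    intro γ hγ
    have hβ : cV V γ ∈ Tspace V b φ := hTconj γ hγ
    have him : (bC V b α γ).im = 0 := by
      have := hIm (cV V γ) hβ
      rwa [cV_cV] at this
    have hre : (bC V b α γ).re = 0 := by
      have hIβ : (Complex.I • cV V γ) ∈ Tspace V b φ :=
        Submodule.smul_mem _ _ hβ
      have := hIm (Complex.I • cV V γ) hIβ
      rw [cV_smul, cV_cV] at this
      simp only [map_smul, smul_eq_mul] at this
      rw [Complex.mul_im] at this
      simpa [Complex.conjAe] using this
    exact Complex.ext hre him
  -- bC α y = 0 for all y
  have hall : ∀ y : VC V, bC V b α y = 0 := by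
    intro y
    have hy : y ∈ Submodule.span ℂ ({φ, cV V φ} : Set (VC V)) ⊔ Tspace V b φ := by
      rw [codis]; trivial
    obtain ⟨u, hu, t, ht, rfl⟩ := Submodule.mem_sup.mp hy
    obtain ⟨z, w, hzw⟩ := Submodule.mem_span_pair.mp hu
    rw [map_add, hT0 t ht, ← hzw]
    simp only [map_add, map_smul, smul_eq_mul]
    rw [hαφ.1, hαφ.2]
    ring
  exact bC_nondeg V b hnd α hall

end
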